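/- Let f : 𝒫(Ω) → ℝ≥0 be a monotone nondecreasing submodular set function on a finite set Ω with f(∅) = 0, and let k ≥ 1. Let S_greedy be the set of size k obtained by greedily adding, at each of k steps, an element maximizing the marginal gain. Let S* be a maximizer of f over all subsets of size at most k. Then f(S_greedy) ≥ (1 - (1 - 1/k)^k) · f(S*) ≥ (1 - 1/e) · f(S*). -/

import Mathlib

open Finset

private lemma submod_sum_bound {Ω : Type*} [DecidableEq Ω]
    (f : Finset Ω → ℝ)
    (hsub : ∀ X Y : Finset Ω, X ⊆ Y → ∀ v ∉ Y,
      f (insert v X) - f X ≥ f (insert v Y) - f Y)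
    (A : Finset Ω) (T : Finset Ω) :
    f (A ∪ T) ≤ f A + ∑ v ∈ T, (f (insert v A) - f A) := by
  induction T using Finset.induction_on with
  | empty => simp
  | @insert a T' ha ih =>
    rw [Finset.sum_insert ha]
    have h1 : A ∪ insert a T' = insert a (A ∪ T') := by
      ext x; simp [or_comm, or_left_comm, or_assoc]
    rw [h1]
    by_cases haA : a ∈ A ∪ T'
    · have : insert a (A ∪ T') = A ∪ T' := Finset.insert_eq_self.mpr haA
      rw [this]
      have hma : 0 ≤ f (insert a A) - f A := by
        rcases Finset.mem_union.mp haA with h | h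
        · simp [Finset.insert_eq_self.mpr h]
        ·
          exact absurd h ha
      linarith
    · have := hsub A (A ∪ T') Finset.subset_union_left a haA
      linarith

theorem greedy_submodular_guarantee {Ω : Type*} [Fintype Ω] [DecidableEq Ω]
    (f : Finset Ω → ℝ)
    (hnonneg : ∀ S : Finset Ω, 0 ≤ f S)
    (hmono : ∀ X Y : Finset Ω, X ⊆ Y → f X ≤ f Y)
    (hsub : ∀ X Y : Finset Ω, X ⊆ Y → ∀ v ∉ Y,
      f (insert v X) - f X ≥ f (insert v Y) - f Y)
    (hempty : f ∅ = 0)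
    (k : ℕ) (hk : 1 ≤ k) (hcard : k ≤ Fintype.card Ω)
    (S : ℕ → Finset Ω) (hS0 : S 0 = ∅)
    (hgreedy : ∀ i < k, ∃ v ∉ S i, S (i + 1) = insert v (S i) ∧
      ∀ w ∉ S i, f (insert w (S i)) - f (S i) ≤ f (insert v (S i)) - f (S i))
    (Sstar : Finset Ω) (hSstar_card : Sstar.card ≤ k)
    (hopt : ∀ T : Finset Ω, T.card ≤ k → f T ≤ f Sstar) :
    f (S k) ≥ (1 - (1 - 1 / (k : ℝ)) ^ k) * f Sstar ∧
    (1 - (1 - 1 / (k : ℝ)) ^ k) * f Sstar ≥ (1 - 1 / Real.exp 1) * f Sstar := by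
  have hkR : (0 : ℝ) < (k : ℝ) := by exact_mod_cast hk
  have hfac0 : (0 : ℝ) ≤ 1 - 1 / (k : ℝ) := by
    rw [sub_nonneg, div_le_one hkR]; exact_mod_cast hk
  -- per-step: for i < k, f Sstar - f (S (i+1)) ≤ (1 - 1/k) * (f Sstar - f (S i))
  have step : ∀ i < k,
      f Sstar - f (S (i + 1)) ≤ (1 - 1 / (k : ℝ)) * (f Sstar - f (S i)) := by
    intro i hi
    obtain ⟨v, hv, hSi1, hmax⟩ := hgreedy i hi
    set d : ℝ := f (insert v (S i)) - f (S i) with hd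
    have hd0 : 0 ≤ d := by
      have := hmono (S i) (insert v (S i)) (Finset.subset_insert _ _)
      linarith
    -- each marginal ≤ d
    have hsum : ∑ w ∈ Sstar, (f (insert w (S i)) - f (S i)) ≤ (Sstar.card : ℝ) * d := by
      have : ∀ w ∈ Sstar, f (insert w (S i)) - f (S i) ≤ d := by
        intro w _
        by_cases hw : w ∈ S i
        · simp [Finset.insert_eq_self.mpr hw, hd0]
        · exact hmax w hw
      calc ∑ w ∈ Sstar, (f (insert w (S i)) - f (S i))
          ≤ ∑ _w ∈ Sstar, d := Finset.sum_le_sum this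
        _ = (Sstar.card : ℝ) * d := by rw [Finset.sum_const, nsmul_eq_mul]
    have h1 : f Sstar ≤ f (S i ∪ Sstar) :=
      hmono _ _ Finset.subset_union_right
    have h2 := submod_sum_bound f hsub (S i) Sstar
    have hcardle : (Sstar.card : ℝ) ≤ (k : ℝ) := by exact_mod_cast hSstar_card
    have h3 : f Sstar ≤ f (S i) + (k : ℝ) * d := by
      have hkd : (Sstar.card : ℝ) * d ≤ (k : ℝ) * d :=
        mul_le_mul_of_nonneg_right hcardle hd0
      linarith
    have h4 : f (S (i + 1)) = f (S i) + d := by rw [hSi1, hd]; ring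
    rw [h4]
    have : (f Sstar - f (S i)) / (k : ℝ) ≤ d := by
      rw [div_le_iff₀ hkR]; nlinarith
    have hexp : (1 - 1 / (k : ℝ)) * (f Sstar - f (S i))
        = (f Sstar - f (S i)) - (f Sstar - f (S i)) / (k : ℝ) := by
      field_simp
    linarith [hexp ▸ (by linarith : f Sstar - (f (S i) + d) ≤ (f Sstar - f (S i)) - (f Sstar - f (S i)) / (k : ℝ))]
  -- induction bound
  have main : ∀ i ≤ k, f Sstar - f (S i) ≤ (1 - 1 / (k : ℝ)) ^ i * f Sstar := by
    intro i
    induction i with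
    | zero => intro _; simp [hS0, hempty]
    | succ n ih =>
      intro hn
      have hnk : n < k := hn
      have h1 := step n hnk
      have h2 := ih (le_of_lt hnk)
      calc f Sstar - f (S (n + 1)) ≤ (1 - 1 / (k : ℝ)) * (f Sstar - f (S n)) := h1
        _ ≤ (1 - 1 / (k : ℝ)) * ((1 - 1 / (k : ℝ)) ^ n * f Sstar) :=
            mul_le_mul_of_nonneg_left h2 hfac0
        _ = (1 - 1 / (k : ℝ)) ^ (n + 1) * f Sstar := by ring
  have hmain := main k le_rfl
  constructor
  · nlinarith [hmain]
  · -- (1-1/k)^k ≤ 1/e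
    have h1 : 1 - 1 / (k : ℝ) ≤ Real.exp (-(1 / (k : ℝ))) := by
      have := Real.add_one_le_exp (-(1 / (k : ℝ)))
      linarith
    have h2 : (1 - 1 / (k : ℝ)) ^ k ≤ Real.exp (-(1 / (k : ℝ))) ^ k :=
      pow_le_pow_left₀ hfac0 h1 k
    have h3 : Real.exp (-(1 / (k : ℝ))) ^ k = Real.exp (-1) := by
      rw [← Real.exp_nat_mul]
      congr 1
      field_simp
    have h4 : Real.exp (-1) = 1 / Real.exp 1 := by
      rw [Real.exp_neg]; exact (inv_eq_one_div _)
    have h5 : (1 - 1 / (k : ℝ)) ^ k ≤ 1 / Real.exp 1 := by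
      rw [← h4]; rw [← h3]; exact h2
    have := hnonneg Sstar
    nlinarith
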